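/- Let (H, C_1,…,C_m, Π_bad, ψ0) and (H', C'_1,…,C'_m, Π'_bad, ψ0') be two instances of the good/bad/ugly setting with the same number of gates m, with associated sequences A^i, good^i, bad^i, ugly^i and A'^i, good'^i, bad'^i, ugly'^i respectively. Suppose ‖good^i‖ = ‖good'^i‖ for every 0 ≤ i ≤ m, and suppose δ ≥ 0 is such that ‖Π'_bad A'^i‖² ≤ δ for every 0 ≤ i ≤ m. Then ‖Π_bad A^m‖² ≤ 2 m² √δ. -/

import Mathlib

section aux
variable {H : Type*} [NormedAddCommGroup H] [InnerProductSpace ℂ H]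

lemma gbu_inner_proj (P : H →L[ℂ] H) (hPidem : ∀ x : H, P (P x) = P x)
    (hPsa : ∀ x y : H, (inner ℂ (P x) y : ℂ) = inner ℂ x (P y)) (x y : H) :
    (inner ℂ (P x) y : ℂ) = inner ℂ (P x) (P y) := by
  have h1 := hPsa x y
  have h2 := hPsa x (P y)
  rw [hPidem y] at h2
  rw [h1, ← h2]

lemma gbu_norm_proj_le (P : H →L[ℂ] H) (hPidem : ∀ x : H, P (P x) = P x)
    (hPsa : ∀ x y : H, (inner ℂ (P x) y : ℂ) = inner ℂ x (P y)) (x : H) :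
    ‖P x‖ ≤ ‖x‖ := by
  have h1 : (inner ℂ (P x) x : ℂ) = inner ℂ (P x) (P x) := gbu_inner_proj P hPidem hPsa x x
  have h2 : (‖P x‖ : ℝ) ^ 2 = RCLike.re (inner ℂ (P x) x : ℂ) := by
    rw [h1, inner_self_eq_norm_sq]
  have h3 : RCLike.re (inner ℂ (P x) x : ℂ) ≤ ‖P x‖ * ‖x‖ :=
    (RCLike.re_le_norm _).trans (norm_inner_le_norm _ _)
  nlinarith [norm_nonneg (P x), norm_nonneg x]

lemma gbu_pyth (P : H →L[ℂ] H) (hPidem : ∀ x : H, P (P x) = P x)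
    (hPsa : ∀ x y : H, (inner ℂ (P x) y : ℂ) = inner ℂ x (P y)) (x : H) :
    ‖x‖ ^ 2 = ‖x - P x‖ ^ 2 + ‖P x‖ ^ 2 := by
  have horth : (inner ℂ (x - P x) (P x) : ℂ) = 0 := by
    rw [inner_sub_left]
    have h1 := hPsa x x
    have h2 : (inner ℂ (P x) (P x) : ℂ) = inner ℂ (P x) x :=
      (gbu_inner_proj P hPidem hPsa x x).symm
    rw [h2, h1, sub_self]
  have hx : x = (x - P x) + P x := by abel
  calc ‖x‖ ^ 2 = ‖(x - P x) + P x‖ ^ 2 := by rw [← hx]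
    _ = ‖x - P x‖ ^ 2 + 2 * RCLike.re (inner ℂ (x - P x) (P x) : ℂ) + ‖P x‖ ^ 2 :=
        norm_add_sq (𝕜 := ℂ) _ _
    _ = ‖x - P x‖ ^ 2 + ‖P x‖ ^ 2 := by rw [horth]; simp

end aux

set_option maxHeartbeats 1000000 in
theorem welded_tree_transcript_simulation_bound
    {H : Type*} [NormedAddCommGroup H] [InnerProductSpace ℂ H]
    {H' : Type*} [NormedAddCommGroup H'] [InnerProductSpace ℂ H']
    (m : ℕ)
    -- the unprimed system
    (C : ℕ → (H ≃ₗᵢ[ℂ] H))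
    (P : H →L[ℂ] H)
    (hPidem : ∀ x : H, P (P x) = P x)
    (hPsa : ∀ x y : H, (inner ℂ (P x) y : ℂ) = inner ℂ x (P y))
    (ψ0 : H) (hψ0 : ‖ψ0‖ = 1) (hψ0bad : P ψ0 = 0)
    (A good bad ugly : ℕ → H)
    (hA0 : A 0 = ψ0)
    (hA : ∀ i : ℕ, 1 ≤ i → i ≤ m → A i = C i (A (i - 1)))
    (hgood0 : good 0 = ψ0) (hbad0 : bad 0 = 0) (hugly0 : ugly 0 = 0)
    (hgood : ∀ i : ℕ, 1 ≤ i → i ≤ m →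
      good i = C i (good (i - 1)) - P (C i (good (i - 1))))
    (hbad : ∀ i : ℕ, 1 ≤ i → i ≤ m → bad i = P (C i (good (i - 1))))
    (hugly : ∀ i : ℕ, 1 ≤ i → i ≤ m → ugly i = bad i + C i (ugly (i - 1)))
    -- the primed system
    (C' : ℕ → (H' ≃ₗᵢ[ℂ] H'))
    (P' : H' →L[ℂ] H')
    (hPidem' : ∀ x : H', P' (P' x) = P' x)
    (hPsa' : ∀ x y : H', (inner ℂ (P' x) y : ℂ) = inner ℂ x (P' y))
    (ψ0' : H') (hψ0' : ‖ψ0'‖ = 1) (hψ0bad' : P' ψ0' = 0)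
    (A' good' bad' ugly' : ℕ → H')
    (hA0' : A' 0 = ψ0')
    (hA' : ∀ i : ℕ, 1 ≤ i → i ≤ m → A' i = C' i (A' (i - 1)))
    (hgood0' : good' 0 = ψ0') (hbad0' : bad' 0 = 0) (hugly0' : ugly' 0 = 0)
    (hgood' : ∀ i : ℕ, 1 ≤ i → i ≤ m →
      good' i = C' i (good' (i - 1)) - P' (C' i (good' (i - 1))))
    (hbad' : ∀ i : ℕ, 1 ≤ i → i ≤ m → bad' i = P' (C' i (good' (i - 1))))
    (hugly' : ∀ i : ℕ, 1 ≤ i → i ≤ m → ugly' i = bad' i + C' i (ugly' (i - 1)))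
    -- the comparison hypotheses
    (hnorm : ∀ i : ℕ, i ≤ m → ‖good i‖ = ‖good' i‖)
    (δ : ℝ) (hδ : 0 ≤ δ)
    (hδbound : ∀ i : ℕ, i ≤ m → ‖P' (A' i)‖ ^ 2 ≤ δ) :
    ‖P (A m)‖ ^ 2 ≤ 2 * (m : ℝ) ^ 2 * Real.sqrt δ := by
  rcases Nat.eq_zero_or_pos m with hm0 | hm
  · subst hm0
    rw [hA0, hψ0bad]
    simp
  set s := Real.sqrt δ with hsdef
  have hs0 : 0 ≤ s := Real.sqrt_nonneg δ
  -- A = good + ugly (unprimed)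
  have hAgu : ∀ i : ℕ, i ≤ m → A i = good i + ugly i := by
    intro i hi
    induction i with
    | zero => simp [hA0, hgood0, hugly0]
    | succ n ih =>
      have hn : n ≤ m := Nat.le_of_succ_le hi
      have h1 : 1 ≤ n + 1 := Nat.succ_le_succ (Nat.zero_le n)
      have hAe := hA (n+1) h1 hi
      have hge := hgood (n+1) h1 hi
      have hbe := hbad (n+1) h1 hi
      have hue := hugly (n+1) h1 hi
      simp only [Nat.add_sub_cancel] at hAe hge hbe hue
      rw [hAe, ih hn, map_add, hue, hge, hbe]
      abel
  -- A = good + ugly (primed)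
  have hAgu' : ∀ i : ℕ, i ≤ m → A' i = good' i + ugly' i := by
    intro i hi
    induction i with
    | zero => simp [hA0', hgood0', hugly0']
    | succ n ih =>
      have hn : n ≤ m := Nat.le_of_succ_le hi
      have h1 : 1 ≤ n + 1 := Nat.succ_le_succ (Nat.zero_le n)
      have hAe := hA' (n+1) h1 hi
      have hge := hgood' (n+1) h1 hi
      have hbe := hbad' (n+1) h1 hi
      have hue := hugly' (n+1) h1 hi
      simp only [Nat.add_sub_cancel] at hAe hge hbe hue
      rw [hAe, ih hn, map_add, hue, hge, hbe]
      abel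
  -- norm of A is 1
  have hnormA : ∀ i : ℕ, i ≤ m → ‖A i‖ = 1 := by
    intro i hi
    induction i with
    | zero => rw [hA0]; exact hψ0
    | succ n ih =>
      have hn : n ≤ m := Nat.le_of_succ_le hi
      have h1 : 1 ≤ n + 1 := Nat.succ_le_succ (Nat.zero_le n)
      have hAe := hA (n+1) h1 hi
      simp only [Nat.add_sub_cancel] at hAe
      rw [hAe, LinearIsometryEquiv.norm_map]
      exact ih hn
  -- Pythagoras in both systems
  have hb_eq : ∀ i : ℕ, 1 ≤ i → i ≤ m →
      ‖bad i‖ ^ 2 = ‖good (i-1)‖ ^ 2 - ‖good i‖ ^ 2 := by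
    intro i h1 h2
    have hp := gbu_pyth P hPidem hPsa (C i (good (i-1)))
    rw [← hgood i h1 h2, ← hbad i h1 h2, LinearIsometryEquiv.norm_map] at hp
    linarith
  have hb_eq' : ∀ i : ℕ, 1 ≤ i → i ≤ m →
      ‖bad' i‖ ^ 2 = ‖good' (i-1)‖ ^ 2 - ‖good' i‖ ^ 2 := by
    intro i h1 h2
    have hp := gbu_pyth P' hPidem' hPsa' (C' i (good' (i-1)))
    rw [← hgood' i h1 h2, ← hbad' i h1 h2, LinearIsometryEquiv.norm_map] at hp
    linarith
  -- the bad norms agree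
  have hbb : ∀ i : ℕ, 1 ≤ i → i ≤ m → ‖bad i‖ = ‖bad' i‖ := by
    intro i h1 h2
    have e1 := hb_eq i h1 h2
    have e2 := hb_eq' i h1 h2
    have n1 := hnorm i h2
    have n2 := hnorm (i-1) (le_trans (Nat.sub_le i 1) h2)
    have hsq : ‖bad i‖ ^ 2 = ‖bad' i‖ ^ 2 := by rw [e1, e2, n1, n2]
    exact (sq_eq_sq₀ (norm_nonneg _) (norm_nonneg _)).mp hsq
  -- ugly is bounded by the sum of the bads (unprimed)
  have hugly_le : ∀ i : ℕ, i ≤ m →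
      ‖ugly i‖ ≤ ∑ j ∈ Finset.range i, ‖bad (j+1)‖ := by
    intro i hi
    induction i with
    | zero => simp [hugly0]
    | succ n ih =>
      have hn : n ≤ m := Nat.le_of_succ_le hi
      have h1 : 1 ≤ n + 1 := Nat.succ_le_succ (Nat.zero_le n)
      have hue := hugly (n+1) h1 hi
      simp only [Nat.add_sub_cancel] at hue
      rw [Finset.sum_range_succ]
      have h2 : ‖ugly (n+1)‖ ≤ ‖bad (n+1)‖ + ‖ugly n‖ := by
        rw [hue]
        calc ‖bad (n+1) + C (n+1) (ugly n)‖
            ≤ ‖bad (n+1)‖ + ‖C (n+1) (ugly n)‖ := norm_add_le _ _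
          _ = ‖bad (n+1)‖ + ‖ugly n‖ := by rw [LinearIsometryEquiv.norm_map]
      linarith [ih hn]
  -- key inequality in the primed system
  have hkey : ∀ i : ℕ, i ≤ m →
      ‖ugly' i‖ ^ 2 + ∑ j ∈ Finset.range i, ‖bad' (j+1)‖ ^ 2
        ≤ ∑ j ∈ Finset.range i, 2 * s * ‖bad' (j+1)‖ := by
    intro i hi
    induction i with
    | zero => simp [hugly0']
    | succ n ih =>
      have hn : n ≤ m := Nat.le_of_succ_le hi
      have h1 : 1 ≤ n + 1 := Nat.succ_le_succ (Nat.zero_le n)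
      have hbe := hbad' (n+1) h1 hi
      have hue := hugly' (n+1) h1 hi
      have hAe := hA' (n+1) h1 hi
      simp only [Nat.add_sub_cancel] at hbe hue hAe
      set y := C' (n+1) (good' n) with hy
      -- C'(ugly' n) = A'(n+1) - y
      have hCu : C' (n+1) (ugly' n) = A' (n+1) - y := by
        rw [hAe, hAgu' n hn, map_add]
        abel
      -- inner product bound
      have hinner : RCLike.re (inner ℂ (bad' (n+1)) (C' (n+1) (ugly' n)) : ℂ)
          ≤ ‖bad' (n+1)‖ * s - ‖bad' (n+1)‖ ^ 2 := by
        rw [hCu, inner_sub_right]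
        have hy2 : (inner ℂ (bad' (n+1)) y : ℂ) = inner ℂ (bad' (n+1)) (bad' (n+1)) := by
          rw [hbe]; exact gbu_inner_proj P' hPidem' hPsa' y y
        have hA2 : (inner ℂ (bad' (n+1)) (A' (n+1)) : ℂ)
            = inner ℂ (bad' (n+1)) (P' (A' (n+1))) := by
          rw [hbe]; exact gbu_inner_proj P' hPidem' hPsa' y (A' (n+1))
        rw [hy2, hA2, map_sub]
        have hPA : ‖P' (A' (n+1))‖ ≤ s := by
          have h := hδbound (n+1) hi
          have : ‖P' (A' (n+1))‖ = Real.sqrt (‖P' (A' (n+1))‖ ^ 2) :=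
            (Real.sqrt_sq (norm_nonneg _)).symm
          rw [this, hsdef]
          exact Real.sqrt_le_sqrt h
        have hre : RCLike.re (inner ℂ (bad' (n+1)) (P' (A' (n+1))) : ℂ)
            ≤ ‖bad' (n+1)‖ * s := by
          calc RCLike.re (inner ℂ (bad' (n+1)) (P' (A' (n+1))) : ℂ)
              ≤ ‖(inner ℂ (bad' (n+1)) (P' (A' (n+1))) : ℂ)‖ := RCLike.re_le_norm _
            _ ≤ ‖bad' (n+1)‖ * ‖P' (A' (n+1))‖ := norm_inner_le_norm _ _
            _ ≤ ‖bad' (n+1)‖ * s := mul_le_mul_of_nonneg_left hPA (norm_nonneg _)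
        have hself : RCLike.re (inner ℂ (bad' (n+1)) (bad' (n+1)) : ℂ)
            = ‖bad' (n+1)‖ ^ 2 := inner_self_eq_norm_sq _
        rw [hself]
        linarith
      -- expand the norm of ugly'(n+1)
      have hnu : ‖ugly' (n+1)‖ ^ 2
          = ‖bad' (n+1)‖ ^ 2
            + 2 * RCLike.re (inner ℂ (bad' (n+1)) (C' (n+1) (ugly' n)) : ℂ)
            + ‖ugly' n‖ ^ 2 := by
        rw [hue, norm_add_sq (𝕜 := ℂ), LinearIsometryEquiv.norm_map]
      rw [Finset.sum_range_succ, Finset.sum_range_succ]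
      have := ih hn
      nlinarith [hinner, hnu]
  -- assemble
  set S := ∑ j ∈ Finset.range m, ‖bad (j+1)‖ with hSdef
  set Q := ∑ j ∈ Finset.range m, ‖bad (j+1)‖ ^ 2 with hQdef
  have hS0 : 0 ≤ S := Finset.sum_nonneg fun j _ => norm_nonneg _
  have hmem : ∀ j ∈ Finset.range m, ‖bad' (j+1)‖ = ‖bad (j+1)‖ := by
    intro j hj
    exact (hbb (j+1) (Nat.succ_le_succ (Nat.zero_le j))
      (Nat.succ_le_of_lt (Finset.mem_range.mp hj))).symm
  have hQS : Q ≤ 2 * s * S := by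
    have hk := hkey m le_rfl
    have e1 : ∑ j ∈ Finset.range m, ‖bad' (j+1)‖ ^ 2 = Q :=
      Finset.sum_congr rfl fun j hj => by rw [hmem j hj]
    have e2 : ∑ j ∈ Finset.range m, 2 * s * ‖bad' (j+1)‖ = 2 * s * S := by
      rw [hSdef, Finset.mul_sum]
      exact Finset.sum_congr rfl fun j hj => by rw [hmem j hj]
    rw [e1, e2] at hk
    nlinarith [sq_nonneg ‖ugly' m‖]
  have hcs : S ^ 2 ≤ (m : ℝ) * Q := by
    have := sq_sum_le_card_mul_sum_sq (s := Finset.range m) (f := fun j => ‖bad (j+1)‖)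
    simpa [Finset.card_range] using this
  -- bound on the final state
  have hPgood : P (good m) = 0 := by
    rcases Nat.eq_zero_or_pos m with hm | hm
    · rw [hm, hgood0]; exact hψ0bad
    · rw [hgood m hm le_rfl, map_sub, hPidem, sub_self]
  have hXS : ‖P (A m)‖ ≤ S := by
    have hPA : P (A m) = P (ugly m) := by
      rw [hAgu m le_rfl, map_add, hPgood, zero_add]
    rw [hPA]
    exact (gbu_norm_proj_le P hPidem hPsa _).trans (hugly_le m le_rfl)
  have hX0 : (0:ℝ) ≤ ‖P (A m)‖ := norm_nonneg _
  have hX1 : ‖P (A m)‖ ≤ 1 := by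
    have := gbu_norm_proj_le P hPidem hPsa (A m)
    rw [hnormA m le_rfl] at this
    exact this
  have hm1 : (1:ℝ) ≤ (m:ℝ) := by exact_mod_cast hm
  by_cases hc : 1 ≤ 2 * (m:ℝ) ^ 2 * s
  · nlinarith [hX0, hX1, hc]
  · push_neg at hc
    have hSle : S ≤ 2 * (m:ℝ) * s := by
      have hmQ : (m : ℝ) * Q ≤ (m : ℝ) * (2 * s * S) :=
        mul_le_mul_of_nonneg_left hQS (by linarith)
      nlinarith [hcs, hS0, hs0, hm1, mul_nonneg (mul_nonneg (by norm_num : (0:ℝ) ≤ 2) (by linarith : (0:ℝ) ≤ (m:ℝ))) hs0]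
    have hXle : ‖P (A m)‖ ≤ 2 * (m:ℝ) * s := hXS.trans hSle
    have h1 : ‖P (A m)‖ ^ 2 ≤ (2 * (m:ℝ) * s) ^ 2 := pow_le_pow_left₀ hX0 hXle 2
    have hm2 : (0:ℝ) ≤ (m:ℝ) ^ 2 - 1 := by nlinarith
    have ha : 2 * (m:ℝ) ^ 2 * s * s ≤ 1 * s :=
      mul_le_mul_of_nonneg_right hc.le hs0
    have hb : 2 * s ≤ 2 * (m:ℝ) ^ 2 * s := by nlinarith [mul_nonneg hs0 hm2]
    nlinarith [h1, ha, hb, hs0]
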